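/- Let K be a field, f ∈ K[z] of degree n ≥ 1, and let h_1, ..., h_n ∈ K(z) be nonzero elements whose z-degrees (degree of numerator minus degree of denominator) are pairwise incongruent modulo n. Then h_1, ..., h_n form a basis of K(z) over K(f(z)). -/

import Mathlib

open Polynomial IntermediateField

namespace Stmt19Aux

variable {K : Type*} [Field K]

lemma dom_add {x y : RatFunc K} (hx : x ≠ 0) (hy : y ≠ 0)
    (hlt : x.intDegree < y.intDegree) :
    x + y ≠ 0 ∧ (x + y).intDegree = y.intDegree := by
  have hne : x + y ≠ 0 := by
    intro h0
    have hxy : x = -y := by linear_combination h0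
    rw [hxy, RatFunc.intDegree_neg] at hlt
    exact lt_irrefl _ hlt
  refine ⟨hne, le_antisymm ?_ ?_⟩
  · have := RatFunc.intDegree_add_le hy hne
    omega
  · have h2 : (x + y) + (-x) ≠ 0 := by
      intro h0
      exact hy (by linear_combination h0)
    have := RatFunc.intDegree_add_le (neg_ne_zero.mpr hx) h2
    rw [show (x + y) + (-x) = y by ring, RatFunc.intDegree_neg] at this
    omega

lemma sum_dom {ι : Type*} [DecidableEq ι] (g : ι → RatFunc K) (s : Finset ι)
    (h0 : ∀ i ∈ s, g i ≠ 0)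
    (hd : ∀ i ∈ s, ∀ j ∈ s, i ≠ j → (g i).intDegree ≠ (g j).intDegree)
    (hne : s.Nonempty) :
    (∑ i ∈ s, g i) ≠ 0 ∧ ∃ i ∈ s, (∑ i ∈ s, g i).intDegree = (g i).intDegree ∧
      ∀ j ∈ s, (g j).intDegree ≤ (g i).intDegree := by
  classical
  induction s using Finset.strongInduction with
  | _ s ih =>
    obtain ⟨i₀, hi₀s, hi₀max⟩ := s.exists_max_image (fun i => (g i).intDegree) hne
    rcases (s.erase i₀).eq_empty_or_nonempty with ht | ht
    · have hs : s = {i₀} := by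
        apply Finset.eq_singleton_iff_unique_mem.mpr
        exact ⟨hi₀s, fun j hj => by
          by_contra hj'
          exact (Finset.notMem_empty j) (ht ▸ Finset.mem_erase.mpr ⟨hj', hj⟩)⟩
      subst hs
      simp only [Finset.sum_singleton]
      exact ⟨h0 i₀ hi₀s, i₀, Finset.mem_singleton_self i₀,
        rfl, fun j hj => by rw [Finset.mem_singleton.mp hj]⟩
    · have hsub : s.erase i₀ ⊂ s := Finset.erase_ssubset hi₀s
      obtain ⟨hT0, j, hjT, hTdeg, _⟩ := ih (s.erase i₀) hsub
        (fun i hi => h0 i (Finset.mem_of_mem_erase hi))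
        (fun i hi k hk => hd i (Finset.mem_of_mem_erase hi) k (Finset.mem_of_mem_erase hk)) ht
      have hjs : j ∈ s := Finset.mem_of_mem_erase hjT
      have hjne : j ≠ i₀ := Finset.ne_of_mem_erase hjT
      have hlt : (∑ i ∈ s.erase i₀, g i).intDegree < (g i₀).intDegree := by
        rw [hTdeg]
        exact lt_of_le_of_ne (hi₀max j hjs) (hd j hjs i₀ hi₀s hjne)
      have key := dom_add hT0 (h0 i₀ hi₀s) hlt
      rw [← Finset.sum_erase_add s g hi₀s]
      exact ⟨key.1, i₀, hi₀s, key.2, hi₀max⟩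

lemma aeval_f (f p : K[X]) :
    aeval (algebraMap K[X] (RatFunc K) f) p = algebraMap K[X] (RatFunc K) (p.comp f) := by
  rw [Polynomial.aeval_algebraMap_apply, Polynomial.comp_eq_aeval]

lemma deg_dvd (f : K[X]) (n : ℕ) (hdeg : f.natDegree = n)
    {x : RatFunc K} (hx : x ∈ adjoin K {algebraMap K[X] (RatFunc K) f}) (hx0 : x ≠ 0) :
    (n : ℤ) ∣ x.intDegree := by
  obtain ⟨r, s, hrs⟩ := (mem_adjoin_simple_iff K x).mp hx
  rw [aeval_f, aeval_f] at hrs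
  set A := algebraMap K[X] (RatFunc K) (r.comp f) with hA
  set B := algebraMap K[X] (RatFunc K) (s.comp f) with hB
  have hB0 : B ≠ 0 := by intro h; rw [hrs, h, div_zero] at hx0; exact hx0 rfl
  have hA0 : A ≠ 0 := by intro h; rw [hrs, h, zero_div] at hx0; exact hx0 rfl
  have hmul : A = x * B := by rw [hrs]; field_simp
  have hdegA : A.intDegree = x.intDegree + B.intDegree := by
    rw [hmul, RatFunc.intDegree_mul hx0 hB0]
  have h1 : A.intDegree = (r.comp f).natDegree := RatFunc.intDegree_polynomial
  have h2 : B.intDegree = (s.comp f).natDegree := RatFunc.intDegree_polynomial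
  rw [h1, h2, Polynomial.natDegree_comp, Polynomial.natDegree_comp, hdeg] at hdegA
  refine ⟨(r.natDegree : ℤ) - s.natDegree, ?_⟩
  push_cast at hdegA ⊢
  linarith

lemma fin_le (f : K[X]) (n : ℕ) (hn : 1 ≤ n) (hdeg : f.natDegree = n)
    (F : IntermediateField K (RatFunc K))
    (hF : F = IntermediateField.adjoin K {algebraMap K[X] (RatFunc K) f}) :
    FiniteDimensional F (RatFunc K) ∧ Module.finrank F (RatFunc K) ≤ n := by
  set y0 : RatFunc K := algebraMap K[X] (RatFunc K) f with hy0
  have hy0F : y0 ∈ F := by rw [hF]; exact subset_adjoin K _ rfl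
  set y : F := ⟨y0, hy0F⟩ with hy
  set P : Polynomial F := f.map (algebraMap K F) - C y with hP
  have hmapdeg : (f.map (algebraMap K F)).natDegree = n := by
    rw [Polynomial.natDegree_map, hdeg]
  have hPdeg : P.natDegree = n := by
    rw [hP, Polynomial.natDegree_sub_C, hmapdeg]
  have hP0 : P ≠ 0 := by
    intro h; rw [h, natDegree_zero] at hPdeg; omega
  have haeX : aeval (RatFunc.X) f = y0 := by
    rw [← RatFunc.algebraMap_X, aeval_f, Polynomial.comp_X]
  have hPX : aeval (RatFunc.X : RatFunc K) P = 0 := by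
    rw [hP, map_sub, aeval_C, Polynomial.aeval_map_algebraMap, haeX]
    have : (algebraMap F (RatFunc K)) y = y0 := rfl
    rw [this, sub_self]
  have hint : IsIntegral F (RatFunc.X : RatFunc K) :=
    (isAlgebraic_iff_isIntegral.mp ⟨P, hP0, hPX⟩)
  have hpoly : ∀ p : K[X], algebraMap K[X] (RatFunc K) p ∈ adjoin F {(RatFunc.X : RatFunc K)} := by
    intro p
    induction p using Polynomial.induction_on' with
    | add p q hp hq => rw [map_add]; exact add_mem hp hq
    | monomial m a =>
      rw [← Polynomial.C_mul_X_pow_eq_monomial, map_mul, map_pow]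
      refine mul_mem ?_ (pow_mem ?_ m)
      · have : algebraMap K[X] (RatFunc K) (Polynomial.C a)
            = algebraMap F (RatFunc K) (algebraMap K F a) := by
          rw [← IsScalarTower.algebraMap_apply, IsScalarTower.algebraMap_apply K K[X] (RatFunc K),
            Polynomial.algebraMap_eq]
        rw [this]
        exact IntermediateField.algebraMap_mem _ _
      · rw [RatFunc.algebraMap_X]
        exact mem_adjoin_simple_self F _
  have htop : adjoin F {(RatFunc.X : RatFunc K)} = ⊤ := by
    rw [eq_top_iff]
    intro x _
    induction x using RatFunc.induction_on with
    | f p q hq => exact div_mem (hpoly p) (hpoly q)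
  have hfd1 : FiniteDimensional F (adjoin F {(RatFunc.X : RatFunc K)}) :=
    IntermediateField.adjoin.finiteDimensional hint
  rw [htop] at hfd1
  have hfd : FiniteDimensional F (RatFunc K) :=
    (IntermediateField.topEquiv (F := F) (E := RatFunc K)).toLinearEquiv.finiteDimensional
  refine ⟨hfd, ?_⟩
  have h1 : Module.finrank F (RatFunc K)
      = Module.finrank F (adjoin F {(RatFunc.X : RatFunc K)}) := by
    rw [htop, IntermediateField.finrank_top']
  rw [h1, IntermediateField.adjoin.finrank hint]
  calc (minpoly F (RatFunc.X : RatFunc K)).natDegree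
      ≤ P.natDegree := Polynomial.natDegree_le_of_dvd (minpoly.dvd F _ hPX) hP0
    _ = n := hPdeg

end Stmt19Aux

/-- `n` nonzero rational functions whose `z`-degrees (numerator degree minus denominator
degree) are pairwise incongruent modulo `n = deg f` form a basis of `K(z)` over `K(f(z))`. -/
theorem stmt19 (K : Type*) [Field K] (f : K[X]) (n : ℕ) (hn : 1 ≤ n)
    (hdeg : f.natDegree = n)
    (F : IntermediateField K (RatFunc K))
    (hF : F = IntermediateField.adjoin K {algebraMap K[X] (RatFunc K) f})
    (h : Fin n → RatFunc K) (hne : ∀ i, h i ≠ 0)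
    (hmod : ∀ i j : Fin n, i ≠ j →
      ¬ ((h i).intDegree ≡ (h j).intDegree [ZMOD (n : ℤ)])) :
    ∃ b : Module.Basis (Fin n) F (RatFunc K), ∀ i, b i = h i := by
  classical
  obtain ⟨hfd, hle⟩ := Stmt19Aux.fin_le f n hn hdeg F hF
  have hind : LinearIndependent F h := by
    rw [Fintype.linearIndependent_iff]
    intro c hc
    by_contra hcon
    push_neg at hcon
    obtain ⟨i, hi⟩ := hcon
    set g : Fin n → RatFunc K := fun j => (c j : RatFunc K) * h j with hg
    set s : Finset (Fin n) := Finset.univ.filter (fun j => c j ≠ 0) with hs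
    have hsne : s.Nonempty := ⟨i, by simp [hs, hi]⟩
    have hc0 : ∀ j ∈ s, (c j : RatFunc K) ≠ 0 := by
      intro j hj
      have : c j ≠ 0 := (Finset.mem_filter.mp hj).2
      exact fun h' => this (Subtype.coe_injective (by simpa using h'))
    have hg0 : ∀ j ∈ s, g j ≠ 0 := fun j hj => mul_ne_zero (hc0 j hj) (hne j)
    have hgd : ∀ i ∈ s, ∀ j ∈ s, i ≠ j → (g i).intDegree ≠ (g j).intDegree := by
      intro a ha b hb hab heq
      rw [hg] at heq
      simp only at heq
      rw [RatFunc.intDegree_mul (hc0 a ha) (hne a),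
        RatFunc.intDegree_mul (hc0 b hb) (hne b)] at heq
      have hda : (n : ℤ) ∣ ((c a : RatFunc K)).intDegree :=
        Stmt19Aux.deg_dvd f n hdeg (hF ▸ (c a).2) (hc0 a ha)
      have hdb : (n : ℤ) ∣ ((c b : RatFunc K)).intDegree :=
        Stmt19Aux.deg_dvd f n hdeg (hF ▸ (c b).2) (hc0 b hb)
      obtain ⟨ka, hka⟩ := hda
      obtain ⟨kb, hkb⟩ := hdb
      exact hmod a b hab (Int.modEq_iff_dvd.mpr ⟨ka - kb, by linear_combination hka - hkb - heq⟩)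
    have hsum : ∑ j ∈ s, g j = 0 := by
      have heq2 : ∑ j ∈ s, g j = ∑ j : Fin n, g j := by
        apply Finset.sum_filter_of_ne
        intro j _ hgj h0
        apply hgj
        rw [hg]
        simp [h0]
      rw [heq2, ← hc]
      apply Finset.sum_congr rfl
      intro j _
      rw [Algebra.smul_def]
      rfl
    exact (Stmt19Aux.sum_dom g s hg0 hgd hsne).1 hsum
  have : Nonempty (Fin n) := ⟨⟨0, hn⟩⟩
  have hge : n ≤ Module.finrank F (RatFunc K) := by
    have := hind.fintype_card_le_finrank
    simpa using this
  have hcard : Fintype.card (Fin n) = Module.finrank F (RatFunc K) := by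
    rw [Fintype.card_fin]; omega
  exact ⟨basisOfLinearIndependentOfCardEqFinrank hind hcard,
    fun i => congrFun (coe_basisOfLinearIndependentOfCardEqFinrank hind hcard) i⟩
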